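/- Let n ≥ 1 and let A and B be n×n complex matrices. For every real t₀, the function t ↦ Tr exp(A + t•B) from ℝ to ℂ is differentiable at t₀ with derivative Tr(B · exp(A + t₀•B)). -/

import Mathlib

open Matrix NormedSpace

namespace TraceExpAux

attribute [local instance] Matrix.linftyOpNormedRing Matrix.linftyOpNormedAlgebra

variable {n : ℕ} (A B : Matrix (Fin n) (Fin n) ℂ)

noncomputable def M (t : ℝ) : Matrix (Fin n) (Fin n) ℂ := A + (t : ℂ) • B

lemma hasDerivAt_M (t : ℝ) : HasDerivAt (M A B) B t := by
  have h1 : HasDerivAt (fun s : ℝ => (s : ℂ)) 1 t := by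
    simpa using (hasDerivAt_id t).ofReal_comp
  have h2 := (h1.smul_const B).const_add A
  rw [one_smul] at h2
  exact h2

noncomputable def trc : Matrix (Fin n) (Fin n) ℂ →L[ℂ] ℂ :=
  LinearMap.toContinuousLinearMap (Matrix.traceLinearMap (Fin n) ℂ ℂ)

@[simp] lemma trc_apply (X : Matrix (Fin n) (Fin n) ℂ) : trc X = X.trace := rfl

noncomputable def trcB : Matrix (Fin n) (Fin n) ℂ →L[ℂ] ℂ :=
  LinearMap.toContinuousLinearMap
    ((Matrix.traceLinearMap (Fin n) ℂ ℂ).comp (LinearMap.mulLeft ℂ B))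

@[simp] lemma trcB_apply (X : Matrix (Fin n) (Fin n) ℂ) : trcB B X = (B * X).trace := rfl

lemma norm_trace_le (X : Matrix (Fin n) (Fin n) ℂ) : ‖X.trace‖ ≤ (n : ℝ) * ‖X‖ := by
  have hentry : ∀ i : Fin n, ‖X i i‖ ≤ ‖X‖ := by
    intro i
    have : ‖X i i‖₊ ≤ ‖X‖₊ := by
      rw [Matrix.linfty_opNNNorm_def]
      exact le_trans (Finset.single_le_sum (f := fun j => ‖X i j‖₊)
        (fun j _ => zero_le) (Finset.mem_univ i))
        (Finset.le_sup (f := fun i => ∑ j : Fin n, ‖X i j‖₊) (Finset.mem_univ i))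
    exact this
  calc ‖X.trace‖ ≤ ∑ i : Fin n, ‖X i i‖ := norm_sum_le _ _
    _ ≤ ∑ _i : Fin n, ‖X‖ := Finset.sum_le_sum fun i _ => hentry i
    _ = (n : ℝ) * ‖X‖ := by simp [Finset.card_univ, mul_comm]

lemma hasDerivAt_pow (k : ℕ) (t : ℝ) :
    HasDerivAt (fun s => M A B s ^ k)
      (∑ i ∈ Finset.range k, M A B t ^ i * B * M A B t ^ (k - 1 - i)) t := by
  induction k with
  | zero =>
    simp only [pow_zero, Finset.range_zero, Finset.sum_empty]
    exact hasDerivAt_const t (1 : Matrix (Fin n) (Fin n) ℂ)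
  | succ k ih =>
    have h := ih.mul (hasDerivAt_M A B t)
    have heq : ((fun s => M A B s ^ k) * M A B) = fun s => M A B s ^ (k + 1) := by
      funext s; rw [Pi.mul_apply, ← pow_succ]
    rw [heq] at h
    refine h.congr_deriv (Eq.symm ?_)
    rw [Finset.sum_range_succ, Finset.sum_mul]
    congr 1
    · refine Finset.sum_congr rfl fun i hi => ?_
      have hik : i < k := Finset.mem_range.mp hi
      have h1 : k - 1 - i + 1 = k - i := by omega
      have h2 : k + 1 - 1 - i = k - i := by omega
      simp only [mul_assoc, ← pow_succ, h1, h2]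
    · simp

lemma hasDerivAt_trace_pow (k : ℕ) (t : ℝ) :
    HasDerivAt (fun s => (M A B s ^ k).trace)
      ((k : ℂ) * (B * M A B t ^ (k - 1)).trace) t := by
  have h := ((trc (n := n)).restrictScalars ℝ).hasFDerivAt.comp_hasDerivAt
    t (hasDerivAt_pow A B k t)
  refine h.congr_deriv (Eq.symm ?_)
  change _ = trc (n := n) _
  simp only [ContinuousLinearMap.coe_restrictScalars', map_sum, trc_apply]
  have hterm : ∀ i ∈ Finset.range k,
      (M A B t ^ i * B * M A B t ^ (k - 1 - i)).trace = (B * M A B t ^ (k - 1)).trace := by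
    intro i hi
    have hik : i < k := Finset.mem_range.mp hi
    rw [Matrix.trace_mul_comm, ← mul_assoc, ← pow_add]
    have : k - 1 - i + i = k - 1 := by omega
    rw [this, Matrix.trace_mul_comm]
  rw [Finset.sum_congr rfl hterm, Finset.sum_const, Finset.card_range, nsmul_eq_mul]

end TraceExpAux

open TraceExpAux

/-- For `n × n` complex matrices `A`, `B`, the function `t ↦ Tr exp (A + t • B)` is
differentiable at every `t₀ : ℝ` with derivative `Tr (B * exp (A + t₀ • B))`. -/
theorem hasDerivAt_trace_exp
    (n : ℕ) (hn : 1 ≤ n) (A B : Matrix (Fin n) (Fin n) ℂ) (t₀ : ℝ) :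
    HasDerivAt (fun t : ℝ => (NormedSpace.exp (A + (t : ℂ) • B)).trace)
      ((B * NormedSpace.exp (A + (t₀ : ℂ) • B)).trace) t₀ := by
  letI : SeminormedRing (Matrix (Fin n) (Fin n) ℂ) := Matrix.linftyOpSemiNormedRing
  letI : NormedRing (Matrix (Fin n) (Fin n) ℂ) := Matrix.linftyOpNormedRing
  letI : NormedAlgebra ℂ (Matrix (Fin n) (Fin n) ℂ) := Matrix.linftyOpNormedAlgebra
  letI : NormedAlgebra ℝ (Matrix (Fin n) (Fin n) ℂ) := Matrix.linftyOpNormedAlgebra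
  -- the series and its termwise derivative
  set g : ℕ → ℝ → ℂ :=
    fun k t => ((k.factorial : ℂ))⁻¹ • ((M A B t ^ k).trace) with hg_def
  set g' : ℕ → ℝ → ℂ :=
    fun k t => ((k.factorial : ℂ))⁻¹ • ((k : ℂ) * (B * M A B t ^ (k - 1)).trace) with hg'_def
  set C : ℝ := ‖A‖ + (|t₀| + 1) * ‖B‖ with hC_def
  set u : ℕ → ℝ :=
    fun k => (n : ℝ) * ‖B‖ * ((k : ℝ) * C ^ (k - 1) / k.factorial) with hu_def
  set T : Set ℝ := Set.Ioo (t₀ - 1) (t₀ + 1) with hT_def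
  have ht₀T : t₀ ∈ T := by constructor <;> simp
  have hC0 : 0 ≤ C := by positivity
  -- the matrix `M A B t` is bounded on `T`
  have hMle : ∀ t ∈ T, ‖M A B t‖ ≤ C := by
    intro t ht
    obtain ⟨h2, h3⟩ := ht
    have habs : |t| ≤ |t₀| + 1 := by
      rw [abs_le]
      constructor
      · have := neg_abs_le t₀; linarith
      · have := le_abs_self t₀; linarith
    calc ‖M A B t‖ ≤ ‖A‖ + ‖(t : ℂ) • B‖ := norm_add_le _ _
      _ = ‖A‖ + |t| * ‖B‖ := by
          rw [norm_smul, Complex.norm_real, Real.norm_eq_abs]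
      _ ≤ C := by
          rw [hC_def]
          have := mul_le_mul_of_nonneg_right habs (norm_nonneg B)
          linarith
  have hBpow : ∀ t ∈ T, ∀ j : ℕ, ‖B * M A B t ^ j‖ ≤ ‖B‖ * C ^ j := by
    intro t ht j
    induction j with
    | zero => simp
    | succ j ih =>
      calc ‖B * M A B t ^ (j + 1)‖ = ‖B * M A B t ^ j * M A B t‖ := by
            rw [pow_succ, ← mul_assoc]
        _ ≤ ‖B * M A B t ^ j‖ * ‖M A B t‖ := norm_mul_le _ _
        _ ≤ (‖B‖ * C ^ j) * C :=
            mul_le_mul ih (hMle t ht) (norm_nonneg _) (by positivity)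
        _ = ‖B‖ * C ^ (j + 1) := by rw [pow_succ, mul_assoc]
  -- bound on the termwise derivatives
  have hbound : ∀ (k : ℕ), ∀ t ∈ T, ‖g' k t‖ ≤ u k := by
    intro k t ht
    have h1 : ‖(B * M A B t ^ (k - 1)).trace‖ ≤ (n : ℝ) * (‖B‖ * C ^ (k - 1)) :=
      (TraceExpAux.norm_trace_le _).trans
        (mul_le_mul_of_nonneg_left (hBpow t ht (k - 1)) (Nat.cast_nonneg n))
    have h2 : ‖g' k t‖ = (k.factorial : ℝ)⁻¹ * ((k : ℝ) * ‖(B * M A B t ^ (k - 1)).trace‖) := by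
      simp [hg'_def, norm_smul, norm_mul]
    have h3 : (k.factorial : ℝ)⁻¹ * ((k : ℝ) * ((n : ℝ) * (‖B‖ * C ^ (k - 1))))
        = (n : ℝ) * ‖B‖ * ((k : ℝ) * C ^ (k - 1) / k.factorial) := by
      rw [div_eq_mul_inv]; ring
    rw [h2]
    calc (k.factorial : ℝ)⁻¹ * ((k : ℝ) * ‖(B * M A B t ^ (k - 1)).trace‖)
        ≤ (k.factorial : ℝ)⁻¹ * ((k : ℝ) * ((n : ℝ) * (‖B‖ * C ^ (k - 1)))) := by
          gcongr
      _ = (n : ℝ) * ‖B‖ * ((k : ℝ) * C ^ (k - 1) / k.factorial) := h3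
  -- summability of the bounds
  have hu : Summable u := by
    apply Summable.mul_left
    rw [← summable_nat_add_iff 1]
    refine (Real.summable_pow_div_factorial C).congr fun k => ?_
    have hk : (k.factorial : ℝ) ≠ 0 := Nat.cast_ne_zero.mpr k.factorial_ne_zero
    rw [Nat.add_sub_cancel, Nat.factorial_succ]
    push_cast
    field_simp
  -- termwise derivatives
  have hgderiv : ∀ (k : ℕ), ∀ t ∈ T, HasDerivAt (g k) (g' k t) t := fun k t _ =>
    (TraceExpAux.hasDerivAt_trace_pow A B k t).const_smul ((k.factorial : ℂ))⁻¹
  -- exp as a tsum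
  have hexp : ∀ X : Matrix (Fin n) (Fin n) ℂ,
      NormedSpace.exp X = ∑' k : ℕ, ((k.factorial : ℂ))⁻¹ • X ^ k := fun X =>
    congrFun (NormedSpace.exp_eq_tsum (𝕂 := ℂ)) X
  have hexpSummable : ∀ X : Matrix (Fin n) (Fin n) ℂ,
      Summable (fun k : ℕ => ((k.factorial : ℂ))⁻¹ • X ^ k) := fun X =>
    NormedSpace.expSeries_summable' (𝕂 := ℂ) X
  -- summability of `g` at `t₀`
  have hsummt₀ : Summable (fun k => g k t₀) := by
    have h2 := (hexpSummable (M A B t₀)).map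
      (TraceExpAux.trc (n := n)) (TraceExpAux.trc (n := n)).continuous
    refine h2.congr fun k => ?_
    simp [hg_def, Function.comp, _root_.map_smul]
  have key := hasDerivAt_tsum_of_isPreconnected hu isOpen_Ioo isPreconnected_Ioo
    hgderiv hbound ht₀T hsummt₀ ht₀T
  -- identify the function with the series
  have hfuneq : (fun t : ℝ => (NormedSpace.exp (A + (t : ℂ) • B)).trace)
      = fun t => ∑' k, g k t := by
    funext t
    calc (NormedSpace.exp (A + (t : ℂ) • B)).trace
        = TraceExpAux.trc (∑' k : ℕ, ((k.factorial : ℂ))⁻¹ • M A B t ^ k) := by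
          rw [← hexp (M A B t)]; rfl
      _ = ∑' k : ℕ, TraceExpAux.trc (((k.factorial : ℂ))⁻¹ • M A B t ^ k) :=
          (TraceExpAux.trc (n := n)).map_tsum (hexpSummable (M A B t))
      _ = ∑' k : ℕ, g k t := by
          refine tsum_congr fun k => ?_
          rw [_root_.map_smul, TraceExpAux.trc_apply]
  -- identify the derivative with the series of derivatives
  have hsum_g' : Summable (fun k => g' k t₀) :=
    Summable.of_norm_bounded hu fun k => hbound k t₀ ht₀T
  have hEq2 : (B * NormedSpace.exp (A + (t₀ : ℂ) • B)).trace = ∑' k, g' k t₀ := by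
    have h1 : (B * NormedSpace.exp (A + (t₀ : ℂ) • B)).trace
        = ∑' k : ℕ, ((k.factorial : ℂ))⁻¹ • (B * M A B t₀ ^ k).trace := by
      calc (B * NormedSpace.exp (A + (t₀ : ℂ) • B)).trace
          = TraceExpAux.trcB B (∑' k : ℕ, ((k.factorial : ℂ))⁻¹ • M A B t₀ ^ k) := by
            rw [← hexp (M A B t₀)]; rfl
        _ = ∑' k : ℕ, TraceExpAux.trcB B (((k.factorial : ℂ))⁻¹ • M A B t₀ ^ k) :=
            (TraceExpAux.trcB (n := n) B).map_tsum (hexpSummable (M A B t₀))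
        _ = ∑' k : ℕ, ((k.factorial : ℂ))⁻¹ • (B * M A B t₀ ^ k).trace := by
            refine tsum_congr fun k => ?_
            rw [_root_.map_smul, TraceExpAux.trcB_apply]
    rw [h1, Summable.tsum_eq_zero_add hsum_g']
    have hg'0 : g' 0 t₀ = 0 := by simp [hg'_def]
    rw [hg'0, zero_add]
    refine tsum_congr fun k => ?_
    show ((k.factorial : ℂ))⁻¹ • (B * M A B t₀ ^ k).trace = g' (k + 1) t₀
    have hk1 : ((k + 1 : ℕ) : ℂ) ≠ 0 := Nat.cast_ne_zero.mpr (Nat.succ_ne_zero k)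
    have h5 : (((k + 1).factorial : ℂ))⁻¹ * (((k + 1 : ℕ)) : ℂ) = ((k.factorial : ℂ))⁻¹ := by
      rw [Nat.factorial_succ, Nat.cast_mul, mul_inv,
        mul_comm (((k + 1 : ℕ) : ℂ))⁻¹, mul_assoc, inv_mul_cancel₀ hk1, mul_one]
    simp only [hg'_def, Nat.add_sub_cancel, smul_eq_mul]
    rw [← mul_assoc, h5]
  rw [hfuneq, hEq2]
  exact key
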